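/- Let x ∈ {q,−1} and let (R^x_{u,w}) be the family of Kazhdan–Lusztig R^x-polynomials of a pircon system (P,S), and assume it satisfies the up-down symmetry. Then for all u, v ∈ P with u < v, the identity Σ_{z : u ≤ z ≤ v} R^x_{u,z}(q) · q^{ρ(z,v)} · R^x_{z,v}(q^{−1}) = 0 holds in ℤ[q,q^{−1}]; equivalently, the family (R^x_{u,w}) is a P-kernel in the sense of Stanley. -/

import Mathlib

open Polynomial LaurentPolynomial

/-- A quasi special partial matching of a poset `P`: an involution `M : P → P` such that
for every `t`, either `M t ⋖ t`, `M t = t`, or `t ⋖ M t`, and whenever `t ⋖ u` and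
`M t ≠ u`, then `M t < M u`. -/
def IsQSPM {P : Type*} [PartialOrder P] (M : P → P) : Prop :=
  Function.Involutive M ∧
  (∀ t : P, M t ⋖ t ∨ M t = t ∨ t ⋖ M t) ∧
  ∀ t u : P, t ⋖ u → M t ≠ u → M t < M u

/-- A quasi special partial matching of the order ideal `P_{≤w}`. -/
def IsQSPMOn {P : Type*} [PartialOrder P] (w : P) (M : P → P) : Prop :=
  (∀ u : P, u ≤ w → M u ≤ w) ∧
  (∀ u : P, u ≤ w → M (M u) = u) ∧
  (∀ u : P, u ≤ w → M u ⋖ u ∨ M u = u ∨ u ⋖ M u) ∧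
  ∀ u t : P, u ≤ w → t ≤ w → u ⋖ t → M u ≠ t → M u < M t

/-- A special partial matching of the order ideal `P_{≤w}` (whose maximum is `w`). -/
def IsSPMOn {P : Type*} [PartialOrder P] (w : P) (M : P → P) : Prop :=
  IsQSPMOn w M ∧ M w ⋖ w

/-- A pircon: for every non-minimal `x`, the order ideal `P_{≤x}` is finite and admits
a special partial matching. -/
def IsPircon (P : Type*) [PartialOrder P] : Prop :=
  ∀ x : P, ¬ IsMin x → (Set.Iic x).Finite ∧ ∃ M : P → P, IsSPMOn x M

/-- A pircon system `(P,S)`: `S` is a set of quasi special partial matchings of `P` such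
that every `w ≠ ⊥` is matched downwards by some `M ∈ S`. -/
def IsPirconSystem {P : Type*} [PartialOrder P] [OrderBot P] (S : Set (P → P)) : Prop :=
  (∀ M ∈ S, IsQSPM M) ∧ ∀ w : P, w ≠ ⊥ → ∃ M ∈ S, M w ⋖ w

/-- The defining properties of the family of Kazhdan--Lusztig `R^x`-polynomials of a
pircon system `(P,S)`, where `x ∈ {q,-1} ⊆ ℤ[q]` (here `q` is the variable `X`). -/
def IsKLRFamily {P : Type*} [PartialOrder P] (S : Set (P → P)) (x : Polynomial ℤ)
    (R : P → P → Polynomial ℤ) : Prop :=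
  (∀ u w : P, ¬ u ≤ w → R u w = 0) ∧
  (∀ w : P, R w w = 1) ∧
  ∀ M ∈ S, ∀ u w : P, M w ⋖ w →
    (M u ⋖ u → R u w = R (M u) (M w)) ∧
    (u ⋖ M u → R u w = (X - 1) * R u (M w) + X * R (M u) (M w)) ∧
    (M u = u → R u w = (X - 1 - x) * R u (M w))

/-- The up-down symmetry for a family of Kazhdan--Lusztig `R^x`-polynomials. -/
def UpDownSymmetry {P : Type*} [PartialOrder P] (S : Set (P → P)) (x : Polynomial ℤ)
    (R : P → P → Polynomial ℤ) : Prop :=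
  ∀ M ∈ S, ∀ u w : P, u ⋖ M u →
    (w ⋖ M w → R u w = R (M u) (M w)) ∧
    (M w ⋖ w → R u w = (X - 1) * R (M u) w + X * R (M u) (M w)) ∧
    (M w = w → R u w = (X - 1 - x) * R (M u) w)

private lemma exists_covBy_le {P : Type*} [PartialOrder P] {t w : P}
    (hfin : (Set.Iic w).Finite) (h : t < w) : ∃ m, t ⋖ m ∧ m ≤ w := by
  classical
  have hs : {y : P | t < y ∧ y ≤ w}.Finite := hfin.subset (fun y hy => hy.2)
  have hne : hs.toFinset.Nonempty := ⟨w, by simp [h]⟩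
  obtain ⟨m, hm, hmin⟩ := hs.toFinset.exists_minimal hne
  simp only [Set.Finite.mem_toFinset, Set.mem_setOf_eq] at hm
  refine ⟨m, ⟨hm.1, fun c hc hcm => hcm.not_ge (hmin ?_ hcm.le)⟩, hm.2⟩
  simp only [Set.Finite.mem_toFinset, Set.mem_setOf_eq]
  exact ⟨hc, hcm.le.trans hm.2⟩

private lemma rho_lt_of_lt {P : Type*} [PartialOrder P] (ρ : P → ℕ)
    (hρcov : ∀ a b : P, a ⋖ b → ρ b = ρ a + 1)
    (hfin : ∀ w : P, (Set.Iic w).Finite) :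
    ∀ t w : P, t < w → ρ t < ρ w := by
  suffices H : ∀ n : ℕ, ∀ t w : P, (Set.Icc t w).ncard ≤ n → t < w → ρ t < ρ w by
    exact fun t w h => H (Set.Icc t w).ncard t w le_rfl h
  intro n
  induction n with
  | zero =>
    intro t w hc h
    exfalso
    have hfin' : (Set.Icc t w).Finite := (hfin w).subset (fun y hy => hy.2)
    have ht : t ∈ Set.Icc t w := ⟨le_rfl, h.le⟩
    have := (Set.ncard_eq_zero hfin').mp (Nat.le_zero.mp hc)
    rw [this] at ht
    exact ht
  | succ n ih =>
    intro t w hc h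
    obtain ⟨m, hcov, hmw⟩ := exists_covBy_le (hfin w) h
    have hρm : ρ m = ρ t + 1 := hρcov t m hcov
    rcases eq_or_lt_of_le hmw with rfl | hmw'
    · omega
    · have hsub : Set.Icc m w ⊆ Set.Icc t w := fun y hy => ⟨hcov.lt.le.trans hy.1, hy.2⟩
      have hne : Set.Icc m w ≠ Set.Icc t w := by
        intro he
        have hmem : t ∈ Set.Icc m w := he ▸ (⟨le_rfl, h.le⟩ : t ∈ Set.Icc t w)
        exact absurd hmem.1 hcov.lt.not_ge
      have hcard : (Set.Icc m w).ncard < (Set.Icc t w).ncard :=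
        Set.ncard_lt_ncard (hsub.ssubset_of_ne hne) ((hfin w).subset (fun y hy => hy.2))
      have := ih m w (by omega) hmw'
      omega

private lemma qspm_le {P : Type*} [PartialOrder P] (ρ : P → ℕ)
    (hρcov : ∀ a b : P, a ⋖ b → ρ b = ρ a + 1)
    (hfin : ∀ w : P, (Set.Iic w).Finite)
    {M : P → P} (hM : IsQSPM M) {w : P} (hw : M w ⋖ w) :
    ∀ t, t ≤ w → M t ≤ w := by
  have hρlt := rho_lt_of_lt ρ hρcov hfin
  suffices H : ∀ n : ℕ, ∀ t, ρ w - ρ t ≤ n → t ≤ w → M t ≤ w by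
    exact fun t ht => H (ρ w - ρ t) t le_rfl ht
  intro n
  induction n with
  | zero =>
    intro t hn ht
    rcases hM.2.1 t with h | h | h
    · exact h.le.trans ht
    · exact h.le.trans ht
    · rcases eq_or_lt_of_le ht with rfl | htw
      · exact absurd h.lt hw.lt.asymm
      · exfalso; have := hρlt t w htw; omega
  | succ n ih =>
    intro t hn ht
    rcases hM.2.1 t with h | h | h
    · exact h.le.trans ht
    · exact h.le.trans ht
    · rcases eq_or_lt_of_le ht with rfl | htw
      · exact absurd h.lt hw.lt.asymm
      · obtain ⟨m, hcov, hmw⟩ := exists_covBy_le (hfin w) htw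
        by_cases hMt : M t = m
        · exact hMt ▸ hmw
        · have hlt' : M t < M m := hM.2.2 t m hcov hMt
          rcases eq_or_lt_of_le hmw with rfl | hmw'
          · exact (hlt'.trans hw.lt).le
          · have hmn : ρ w - ρ m ≤ n := by
              have h1 := hρcov t m hcov
              have h2 := hρlt t w htw
              omega
            exact hlt'.le.trans (ih m hmn hmw)


private lemma laurent_up (a b : ℤ) (hab : a = b + 1) (p r : Polynomial ℤ) :
    (T a : LaurentPolynomial ℤ) * invert (toLaurent ((X - 1) * p + X * r)) =
      (1 - T 1) * (T b * invert (toLaurent p)) + T b * invert (toLaurent r) := by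
  have e1 : invert (toLaurent ((X - 1) * p + X * r)) =
      (T (-1) - 1) * invert (toLaurent p) + T (-1) * invert (toLaurent r) := by
    rw [map_add, map_mul, map_mul, map_sub, map_one, toLaurent_X, map_add, map_mul, map_mul,
      map_sub, map_one, invert_T]
  have h2 : (T 1 : LaurentPolynomial ℤ) * T (-1) = 1 := by
    rw [← T_add]; norm_num
  rw [e1, hab, T_add]
  linear_combination (T b * (invert (toLaurent p) + invert (toLaurent r))) * h2

private lemma laurent_fix {x : Polynomial ℤ} (hx : x = X ∨ x = -1) (a b : ℤ) (hab : a = b + 1)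
    (p : Polynomial ℤ) :
    (T a : LaurentPolynomial ℤ) * invert (toLaurent ((X - 1 - x) * p)) =
      (-toLaurent x) * (T b * invert (toLaurent p)) := by
  subst hab
  have h2 : (T 1 : LaurentPolynomial ℤ) * T (-1) = 1 := by rw [← T_add]; norm_num
  rcases hx with rfl | rfl
  · rw [show (X - 1 - X : Polynomial ℤ) = -1 by ring, neg_one_mul, map_neg, map_neg,
      toLaurent_X, T_add]
    ring
  · rw [show (X - 1 - (-1) : Polynomial ℤ) = X by ring, map_mul, toLaurent_X, map_mul, invert_T,
      T_add, show toLaurent (-1 : Polynomial ℤ) = -1 by simp]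
    linear_combination (T b * invert (toLaurent p)) * h2

private lemma laurent_negx {x : Polynomial ℤ} (hx : x = X ∨ x = -1) :
    (-toLaurent x) * toLaurent (X - 1 - x) = (T 1 : LaurentPolynomial ℤ) := by
  rw [← map_neg, ← map_mul, ← toLaurent_X (R := ℤ)]
  congr 1
  rcases hx with rfl | rfl <;> ring

/-- If the family of Kazhdan--Lusztig `R^x`-polynomials of a pircon system `(P,S)`
satisfies the up-down symmetry, then it is a `P`-kernel: for all `u < v`,
`Σ_{u ≤ z ≤ v} R^x_{u,z}(q) · q^{ρ(z,v)} · R^x_{z,v}(q⁻¹) = 0` in `ℤ[q,q⁻¹]`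
(the involution `q ↦ q⁻¹` of `ℤ[q,q⁻¹]` being `LaurentPolynomial.invert`). -/
theorem upDownSymmetry_imp_kernel {P : Type*} [PartialOrder P] [OrderBot P]
    (ρ : P → ℕ) (hρ0 : ρ (⊥ : P) = 0) (hρcov : ∀ a b : P, a ⋖ b → ρ b = ρ a + 1)
    (hP : IsPircon P) {S : Set (P → P)} (hS : IsPirconSystem S)
    {x : Polynomial ℤ} (hx : x = X ∨ x = -1)
    {R : P → P → Polynomial ℤ} (hR : IsKLRFamily S x R)
    (hud : UpDownSymmetry S x R) :
    ∀ u v : P, u < v →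
      ∑ᶠ z ∈ Set.Icc u v,
        toLaurent (R u z) * (T ((ρ v : ℤ) - (ρ z : ℤ)) * invert (toLaurent (R z v))) = 0 := by
  classical
  obtain ⟨hR0, hR1, hRrec⟩ := hR
  have hfin : ∀ w : P, (Set.Iic w).Finite := by
    intro w
    by_cases hw : IsMin w
    · have he : Set.Iic w = {w} := by
        ext y
        simp only [Set.mem_Iic, Set.mem_singleton_iff]
        exact ⟨fun h => le_antisymm h (hw h), fun h => h.le⟩
      rw [he]; exact Set.finite_singleton w
    · exact (hP w hw).1
  have hρlt := rho_lt_of_lt ρ hρcov hfin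
  suffices key : ∀ n : ℕ, ∀ v : P, ρ v = n → ∀ u : P, u < v →
      (∑ᶠ z ∈ Set.Icc u v,
        toLaurent (R u z) * (T ((ρ v : ℤ) - (ρ z : ℤ)) * invert (toLaurent (R z v)))) = 0 by
    intro u v huv
    exact key (ρ v) v rfl u huv
  intro n
  induction n using Nat.strong_induction_on with
  | _ n IH =>
  intro v hn u huv
  have hvbot : v ≠ ⊥ := ((bot_le : (⊥ : P) ≤ u).trans_lt huv).ne'
  obtain ⟨M, hMS, hMv⟩ := hS.2 v hvbot
  have hMq := hS.1 M hMS
  have hMinv : ∀ z : P, M (M z) = z := hMq.1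
  have htri := hMq.2.1
  have hcv : ρ v = ρ (M v) + 1 := hρcov (M v) v hMv
  have hML : ∀ t : P, t ≤ v → M t ≤ v := qspm_le ρ hρcov hfin hMq hMv
  set F : Finset P := (hfin v).toFinset with hF
  have hmemF : ∀ z : P, z ∈ F ↔ z ≤ v := fun z => by simp [hF]
  -- step 1 : from finsum to a sum over F
  have hIccfin : (Set.Icc u v).Finite := (hfin v).subset fun y hy => hy.2
  have step1 : (∑ᶠ z ∈ Set.Icc u v,
        toLaurent (R u z) * (T ((ρ v : ℤ) - (ρ z : ℤ)) * invert (toLaurent (R z v)))) =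
      ∑ z ∈ F, toLaurent (R u z) * (T ((ρ v : ℤ) - (ρ z : ℤ)) * invert (toLaurent (R z v))) := by
    rw [← hIccfin.coe_toFinset, finsum_mem_coe_finset]
    apply Finset.sum_subset
    · intro z hz
      rw [hmemF]
      exact (hIccfin.mem_toFinset.mp hz).2
    · intro z hzF hz
      have hnu : ¬ u ≤ z := fun hu => hz (hIccfin.mem_toFinset.mpr ⟨hu, (hmemF z).mp hzF⟩)
      rw [hR0 u z hnu, map_zero, zero_mul]
  rw [step1]
  -- membership lemmas
  have hmemFd : ∀ z : P, z ∈ F.filter (fun z => M z ⋖ z) ↔ z ≤ v ∧ M z ⋖ z := by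
    intro z; rw [Finset.mem_filter, hmemF]
  have hmemFup : ∀ z : P, z ∈ (F.filter (fun z => ¬ M z ⋖ z)).filter (fun z => ¬ M z = z) →
      z ≤ v ∧ z ⋖ M z := by
    intro z hz
    rw [Finset.mem_filter, Finset.mem_filter, hmemF] at hz
    obtain ⟨⟨h1, h2⟩, h3⟩ := hz
    rcases htri z with h | h | h
    · exact absurd h h2
    · exact absurd h h3
    · exact ⟨h1, h⟩
  have hmemFfix : ∀ z : P, z ∈ (F.filter (fun z => ¬ M z ⋖ z)).filter (fun z => M z = z) →
      z ≤ v ∧ M z = z := by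
    intro z hz
    rw [Finset.mem_filter, Finset.mem_filter, hmemF] at hz
    exact ⟨hz.1.1, hz.2⟩
  -- split the sum in three parts
  rw [← Finset.sum_filter_add_sum_filter_not F (fun z => M z ⋖ z)
      (fun z => toLaurent (R u z) * (T ((ρ v : ℤ) - (ρ z : ℤ)) * invert (toLaurent (R z v)))),
    ← Finset.sum_filter_add_sum_filter_not (F.filter (fun z => ¬ M z ⋖ z)) (fun z => M z = z)
      (fun z => toLaurent (R u z) * (T ((ρ v : ℤ) - (ρ z : ℤ)) * invert (toLaurent (R z v))))]
  -- transform the part over down elements (reindex through M)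
  have hA : (∑ z ∈ F.filter (fun z => M z ⋖ z),
        toLaurent (R u z) * (T ((ρ v : ℤ) - (ρ z : ℤ)) * invert (toLaurent (R z v)))) =
      ∑ y ∈ (F.filter (fun z => ¬ M z ⋖ z)).filter (fun z => ¬ M z = z),
        toLaurent (R u (M y)) *
          (T ((ρ (M v) : ℤ) - (ρ y : ℤ)) * invert (toLaurent (R y (M v)))) := by
    refine Finset.sum_nbij' M M ?_ ?_ ?_ ?_ ?_
    · intro z hz
      obtain ⟨hzv, hdz⟩ := (hmemFd z).mp hz
      rw [Finset.mem_filter, Finset.mem_filter, hmemF]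
      refine ⟨⟨(hdz.lt.trans_le hzv).le, fun hc => ?_⟩, fun he => ?_⟩
      · rw [hMinv] at hc; exact hc.lt.asymm hdz.lt
      · rw [hMinv] at he; exact hdz.ne he.symm
    · intro y hy
      obtain ⟨hyv, hup⟩ := hmemFup y hy
      rw [hmemFd]
      exact ⟨hML y hyv, by rw [hMinv]; exact hup⟩
    · intro z _; exact hMinv z
    · intro y _; exact hMinv y
    · intro z hz
      obtain ⟨hzv, hdz⟩ := (hmemFd z).mp hz
      have hrec : R z v = R (M z) (M v) := (hRrec M hMS z v hMv).1 hdz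
      have hT : (T ((ρ v : ℤ) - (ρ z : ℤ)) : LaurentPolynomial ℤ) =
          T ((ρ (M v) : ℤ) - (ρ (M z) : ℤ)) := by
        congr 1
        have h1 := hρcov (M z) z hdz
        push_cast [hcv, h1]
        ring
      rw [hrec, hT, hMinv]
  -- transform the part over up elements
  have hC : (∑ z ∈ (F.filter (fun z => ¬ M z ⋖ z)).filter (fun z => ¬ M z = z),
        toLaurent (R u z) * (T ((ρ v : ℤ) - (ρ z : ℤ)) * invert (toLaurent (R z v)))) =
      (∑ z ∈ (F.filter (fun z => ¬ M z ⋖ z)).filter (fun z => ¬ M z = z),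
        (1 - T 1) * (toLaurent (R u z) *
          (T ((ρ (M v) : ℤ) - (ρ z : ℤ)) * invert (toLaurent (R z (M v))))))
      + ∑ z ∈ (F.filter (fun z => ¬ M z ⋖ z)).filter (fun z => ¬ M z = z),
        toLaurent (R u z) *
          (T ((ρ (M v) : ℤ) - (ρ z : ℤ)) * invert (toLaurent (R (M z) (M v)))) := by
    rw [← Finset.sum_add_distrib]
    apply Finset.sum_congr rfl
    intro z hz
    obtain ⟨hzv, hup⟩ := hmemFup z hz
    have hrec : R z v = (X - 1) * R z (M v) + X * R (M z) (M v) :=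
      (hRrec M hMS z v hMv).2.1 hup
    rw [hrec, laurent_up ((ρ v : ℤ) - (ρ z : ℤ)) ((ρ (M v) : ℤ) - (ρ z : ℤ)) (by push_cast [hcv]; ring) (R z (M v)) (R (M z) (M v))]
    ring
  have hC2 : (∑ z ∈ (F.filter (fun z => ¬ M z ⋖ z)).filter (fun z => ¬ M z = z),
        toLaurent (R u z) *
          (T ((ρ (M v) : ℤ) - (ρ z : ℤ)) * invert (toLaurent (R (M z) (M v))))) =
      ∑ w ∈ F.filter (fun z => M z ⋖ z),
        T 1 * (toLaurent (R u (M w)) *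
          (T ((ρ (M v) : ℤ) - (ρ w : ℤ)) * invert (toLaurent (R w (M v))))) := by
    refine Finset.sum_nbij' M M ?_ ?_ ?_ ?_ ?_
    · intro z hz
      obtain ⟨hzv, hup⟩ := hmemFup z hz
      rw [hmemFd]
      exact ⟨hML z hzv, by rw [hMinv]; exact hup⟩
    · intro w hw
      obtain ⟨hwv, hdw⟩ := (hmemFd w).mp hw
      rw [Finset.mem_filter, Finset.mem_filter, hmemF]
      refine ⟨⟨(hdw.lt.trans_le hwv).le, fun hc => ?_⟩, fun he => ?_⟩
      · rw [hMinv] at hc; exact hc.lt.asymm hdw.lt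
      · rw [hMinv] at he; exact hdw.ne he.symm
    · intro z _; exact hMinv z
    · intro w _; exact hMinv w
    · intro z hz
      obtain ⟨hzv, hup⟩ := hmemFup z hz
      have hT : (T ((ρ (M v) : ℤ) - (ρ z : ℤ)) : LaurentPolynomial ℤ) =
          T 1 * T ((ρ (M v) : ℤ) - (ρ (M z) : ℤ)) := by
        rw [← T_add]
        congr 1
        have h1 := hρcov z (M z) hup
        push_cast [h1]
        ring
      rw [hT, hMinv]
      ring
  -- transform the part over fixed elements
  have hB : (∑ z ∈ (F.filter (fun z => ¬ M z ⋖ z)).filter (fun z => M z = z),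
        toLaurent (R u z) * (T ((ρ v : ℤ) - (ρ z : ℤ)) * invert (toLaurent (R z v)))) =
      ∑ z ∈ (F.filter (fun z => ¬ M z ⋖ z)).filter (fun z => M z = z),
        (-toLaurent x) * (toLaurent (R u z) *
          (T ((ρ (M v) : ℤ) - (ρ z : ℤ)) * invert (toLaurent (R z (M v))))) := by
    apply Finset.sum_congr rfl
    intro z hz
    obtain ⟨hzv, hfx⟩ := hmemFfix z hz
    have hrec : R z v = (X - 1 - x) * R z (M v) := (hRrec M hMS z v hMv).2.2 hfx
    rw [hrec, laurent_fix hx ((ρ v : ℤ) - (ρ z : ℤ)) ((ρ (M v) : ℤ) - (ρ z : ℤ)) (by push_cast [hcv]; ring)]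
    ring
  rw [hA, hB, hC, hC2]
  -- vanishing of level-(M v) sums
  have hzero : ∀ a : P, a ≠ M v →
      (∑ z ∈ F, toLaurent (R a z) *
        (T ((ρ (M v) : ℤ) - (ρ z : ℤ)) * invert (toLaurent (R z (M v))))) = 0 := by
    intro a ha
    by_cases hav : a ≤ M v
    · have hav' : a < M v := hav.lt_of_ne ha
      have hfin' : (Set.Icc a (M v)).Finite := (hfin v).subset fun y hy => hy.2.trans hMv.le
      have he : (∑ z ∈ F, toLaurent (R a z) *
            (T ((ρ (M v) : ℤ) - (ρ z : ℤ)) * invert (toLaurent (R z (M v))))) =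
          ∑ᶠ z ∈ Set.Icc a (M v), toLaurent (R a z) *
            (T ((ρ (M v) : ℤ) - (ρ z : ℤ)) * invert (toLaurent (R z (M v)))) := by
        rw [← hfin'.coe_toFinset, finsum_mem_coe_finset]
        symm
        apply Finset.sum_subset
        · intro z hz
          rw [hmemF]
          exact (hfin'.mem_toFinset.mp hz).2.trans hMv.le
        · intro z hzF hz
          by_cases haz : a ≤ z
          · have hzv' : ¬ z ≤ M v := fun hle => hz (hfin'.mem_toFinset.mpr ⟨haz, hle⟩)
            rw [hR0 z (M v) hzv', map_zero, map_zero, mul_zero, mul_zero]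
          · rw [hR0 a z haz, map_zero, zero_mul]
      rw [he]
      exact IH (ρ (M v)) (by omega) (M v) rfl a hav'
    · apply Finset.sum_eq_zero
      intro z hz
      by_cases haz : a ≤ z
      · have hzv' : ¬ z ≤ M v := fun hle => hav (haz.trans hle)
        rw [hR0 z (M v) hzv', map_zero, map_zero, mul_zero, mul_zero]
      · rw [hR0 a z haz, map_zero, zero_mul]
  have hMune : M u ≠ M v := by
    intro h
    have h2 := congrArg M h
    rw [hMinv, hMinv] at h2
    exact huv.ne h2
  -- a recombination helper
  have hunion : ∀ h : P → LaurentPolynomial ℤ,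
      (∑ z ∈ F.filter (fun z => M z ⋖ z), h z) +
      ((∑ z ∈ (F.filter (fun z => ¬ M z ⋖ z)).filter (fun z => M z = z), h z) +
        ∑ z ∈ (F.filter (fun z => ¬ M z ⋖ z)).filter (fun z => ¬ M z = z), h z) =
      ∑ z ∈ F, h z := by
    intro h
    rw [Finset.sum_filter_add_sum_filter_not (F.filter (fun z => ¬ M z ⋖ z)) (fun z => M z = z) h,
      Finset.sum_filter_add_sum_filter_not F (fun z => M z ⋖ z) h]
  -- now the three cases for u
  rcases htri u with hmu | hmu | hmu
  · -- M u ⋖ u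
    have h₃ : M u ⋖ M (M u) := by rw [hMinv]; exact hmu
    have hune : u ≠ M v := by
      intro h
      have h2 := congrArg M h
      rw [hMinv] at h2
      rw [h2] at hmu
      exact absurd hmu.lt huv.asymm
    have hFup : (∑ y ∈ (F.filter (fun z => ¬ M z ⋖ z)).filter (fun z => ¬ M z = z),
          toLaurent (R u (M y)) *
            (T ((ρ (M v) : ℤ) - (ρ y : ℤ)) * invert (toLaurent (R y (M v))))) +
        (∑ z ∈ (F.filter (fun z => ¬ M z ⋖ z)).filter (fun z => ¬ M z = z),
          (1 - T 1) * (toLaurent (R u z) *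
            (T ((ρ (M v) : ℤ) - (ρ z : ℤ)) * invert (toLaurent (R z (M v)))))) =
        ∑ z ∈ (F.filter (fun z => ¬ M z ⋖ z)).filter (fun z => ¬ M z = z),
          ((1 - T 1) * (toLaurent (R u z) *
            (T ((ρ (M v) : ℤ) - (ρ z : ℤ)) * invert (toLaurent (R z (M v))))) +
          toLaurent (R (M u) z) *
            (T ((ρ (M v) : ℤ) - (ρ z : ℤ)) * invert (toLaurent (R z (M v))))) := by
      rw [← Finset.sum_add_distrib]
      apply Finset.sum_congr rfl
      intro y hy
      obtain ⟨hyv, hup⟩ := hmemFup y hy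
      have h' : M (M y) ⋖ M y := by rw [hMinv]; exact hup
      have e := (hRrec M hMS u (M y) h').1 hmu
      rw [hMinv] at e
      rw [e]
      ring
    have hFd : (∑ w ∈ F.filter (fun z => M z ⋖ z),
          T 1 * (toLaurent (R u (M w)) *
            (T ((ρ (M v) : ℤ) - (ρ w : ℤ)) * invert (toLaurent (R w (M v)))))) =
        ∑ w ∈ F.filter (fun z => M z ⋖ z),
          ((1 - T 1) * (toLaurent (R u w) *
            (T ((ρ (M v) : ℤ) - (ρ w : ℤ)) * invert (toLaurent (R w (M v))))) +
          toLaurent (R (M u) w) *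
            (T ((ρ (M v) : ℤ) - (ρ w : ℤ)) * invert (toLaurent (R w (M v))))) := by
      apply Finset.sum_congr rfl
      intro w hw
      obtain ⟨hwv, hdw⟩ := (hmemFd w).mp hw
      have e := (hud M hMS (M u) w h₃).2.1 hdw
      rw [hMinv] at e
      rw [e, map_add, map_mul, map_mul, map_sub, map_one, toLaurent_X]
      ring
    have hFfix : (∑ z ∈ (F.filter (fun z => ¬ M z ⋖ z)).filter (fun z => M z = z),
          (-toLaurent x) * (toLaurent (R u z) *
            (T ((ρ (M v) : ℤ) - (ρ z : ℤ)) * invert (toLaurent (R z (M v)))))) =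
        ∑ z ∈ (F.filter (fun z => ¬ M z ⋖ z)).filter (fun z => M z = z),
          ((1 - T 1) * (toLaurent (R u z) *
            (T ((ρ (M v) : ℤ) - (ρ z : ℤ)) * invert (toLaurent (R z (M v))))) +
          toLaurent (R (M u) z) *
            (T ((ρ (M v) : ℤ) - (ρ z : ℤ)) * invert (toLaurent (R z (M v))))) := by
      apply Finset.sum_congr rfl
      intro z hz
      obtain ⟨hzv, hfx⟩ := hmemFfix z hz
      have e := (hud M hMS (M u) z h₃).2.2 hfx
      rw [hMinv] at e
      rw [e, map_mul, map_sub, map_sub, map_one, toLaurent_X]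
      ring
    have h4 : (∑ z ∈ F, ((1 - T 1) * (toLaurent (R u z) *
          (T ((ρ (M v) : ℤ) - (ρ z : ℤ)) * invert (toLaurent (R z (M v))))) +
        toLaurent (R (M u) z) *
          (T ((ρ (M v) : ℤ) - (ρ z : ℤ)) * invert (toLaurent (R z (M v)))))) = 0 := by
      rw [Finset.sum_add_distrib, ← Finset.mul_sum, hzero u hune, hzero (M u) hMune,
        mul_zero, add_zero]
    linear_combination hFup + hFd + hFfix +
      hunion (fun z => (1 - T 1) * (toLaurent (R u z) *
          (T ((ρ (M v) : ℤ) - (ρ z : ℤ)) * invert (toLaurent (R z (M v))))) +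
        toLaurent (R (M u) z) *
          (T ((ρ (M v) : ℤ) - (ρ z : ℤ)) * invert (toLaurent (R z (M v))))) + h4
  · -- M u = u
    have hune : u ≠ M v := by
      intro h
      have h2 := congrArg M h
      rw [hMinv] at h2
      rw [hmu] at h2
      exact huv.ne h2
    have hFup : (∑ y ∈ (F.filter (fun z => ¬ M z ⋖ z)).filter (fun z => ¬ M z = z),
          toLaurent (R u (M y)) *
            (T ((ρ (M v) : ℤ) - (ρ y : ℤ)) * invert (toLaurent (R y (M v))))) +
        (∑ z ∈ (F.filter (fun z => ¬ M z ⋖ z)).filter (fun z => ¬ M z = z),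
          (1 - T 1) * (toLaurent (R u z) *
            (T ((ρ (M v) : ℤ) - (ρ z : ℤ)) * invert (toLaurent (R z (M v)))))) =
        ∑ z ∈ (F.filter (fun z => ¬ M z ⋖ z)).filter (fun z => ¬ M z = z),
          (-toLaurent x) * (toLaurent (R u z) *
            (T ((ρ (M v) : ℤ) - (ρ z : ℤ)) * invert (toLaurent (R z (M v))))) := by
      rw [← Finset.sum_add_distrib]
      apply Finset.sum_congr rfl
      intro y hy
      obtain ⟨hyv, hup⟩ := hmemFup y hy
      have h' : M (M y) ⋖ M y := by rw [hMinv]; exact hup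
      have e := (hRrec M hMS u (M y) h').2.2 hmu
      rw [hMinv] at e
      rw [e, map_mul, map_sub, map_sub, map_one, toLaurent_X]
      ring
    have hFd : (∑ w ∈ F.filter (fun z => M z ⋖ z),
          T 1 * (toLaurent (R u (M w)) *
            (T ((ρ (M v) : ℤ) - (ρ w : ℤ)) * invert (toLaurent (R w (M v)))))) =
        ∑ w ∈ F.filter (fun z => M z ⋖ z),
          (-toLaurent x) * (toLaurent (R u w) *
            (T ((ρ (M v) : ℤ) - (ρ w : ℤ)) * invert (toLaurent (R w (M v))))) := by
      apply Finset.sum_congr rfl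
      intro w hw
      obtain ⟨hwv, hdw⟩ := (hmemFd w).mp hw
      have e := (hRrec M hMS u w hdw).2.2 hmu
      rw [e, map_mul]
      linear_combination (-(toLaurent (R u (M w)) *
        (T ((ρ (M v) : ℤ) - (ρ w : ℤ)) * invert (toLaurent (R w (M v)))))) * laurent_negx hx
    have h4 : (∑ z ∈ F, (-toLaurent x) * (toLaurent (R u z) *
        (T ((ρ (M v) : ℤ) - (ρ z : ℤ)) * invert (toLaurent (R z (M v)))))) = 0 := by
      rw [← Finset.mul_sum, hzero u hune, mul_zero]
    linear_combination hFup + hFd +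
      hunion (fun z => (-toLaurent x) * (toLaurent (R u z) *
        (T ((ρ (M v) : ℤ) - (ρ z : ℤ)) * invert (toLaurent (R z (M v)))))) + h4
  · -- u ⋖ M u
    have hFup : (∑ y ∈ (F.filter (fun z => ¬ M z ⋖ z)).filter (fun z => ¬ M z = z),
          toLaurent (R u (M y)) *
            (T ((ρ (M v) : ℤ) - (ρ y : ℤ)) * invert (toLaurent (R y (M v))))) +
        (∑ z ∈ (F.filter (fun z => ¬ M z ⋖ z)).filter (fun z => ¬ M z = z),
          (1 - T 1) * (toLaurent (R u z) *
            (T ((ρ (M v) : ℤ) - (ρ z : ℤ)) * invert (toLaurent (R z (M v)))))) =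
        ∑ z ∈ (F.filter (fun z => ¬ M z ⋖ z)).filter (fun z => ¬ M z = z),
          T 1 * (toLaurent (R (M u) z) *
            (T ((ρ (M v) : ℤ) - (ρ z : ℤ)) * invert (toLaurent (R z (M v))))) := by
      rw [← Finset.sum_add_distrib]
      apply Finset.sum_congr rfl
      intro y hy
      obtain ⟨hyv, hup⟩ := hmemFup y hy
      have h' : M (M y) ⋖ M y := by rw [hMinv]; exact hup
      have e := (hRrec M hMS u (M y) h').2.1 hmu
      rw [hMinv] at e
      rw [e, map_add, map_mul, map_mul, map_sub, map_one, toLaurent_X]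
      ring
    have hFd : (∑ w ∈ F.filter (fun z => M z ⋖ z),
          T 1 * (toLaurent (R u (M w)) *
            (T ((ρ (M v) : ℤ) - (ρ w : ℤ)) * invert (toLaurent (R w (M v)))))) =
        ∑ w ∈ F.filter (fun z => M z ⋖ z),
          T 1 * (toLaurent (R (M u) w) *
            (T ((ρ (M v) : ℤ) - (ρ w : ℤ)) * invert (toLaurent (R w (M v))))) := by
      apply Finset.sum_congr rfl
      intro w hw
      obtain ⟨hwv, hdw⟩ := (hmemFd w).mp hw
      have h'' : M w ⋖ M (M w) := by rw [hMinv]; exact hdw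
      have e := (hud M hMS u (M w) hmu).1 h''
      rw [hMinv] at e
      rw [e]
    have hFfix : (∑ z ∈ (F.filter (fun z => ¬ M z ⋖ z)).filter (fun z => M z = z),
          (-toLaurent x) * (toLaurent (R u z) *
            (T ((ρ (M v) : ℤ) - (ρ z : ℤ)) * invert (toLaurent (R z (M v)))))) =
        ∑ z ∈ (F.filter (fun z => ¬ M z ⋖ z)).filter (fun z => M z = z),
          T 1 * (toLaurent (R (M u) z) *
            (T ((ρ (M v) : ℤ) - (ρ z : ℤ)) * invert (toLaurent (R z (M v))))) := by
      apply Finset.sum_congr rfl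
      intro z hz
      obtain ⟨hzv, hfx⟩ := hmemFfix z hz
      have e := (hud M hMS u z hmu).2.2 hfx
      rw [e, map_mul]
      linear_combination (toLaurent (R (M u) z) *
        (T ((ρ (M v) : ℤ) - (ρ z : ℤ)) * invert (toLaurent (R z (M v))))) * laurent_negx hx
    have h4 : (∑ z ∈ F, T 1 * (toLaurent (R (M u) z) *
        (T ((ρ (M v) : ℤ) - (ρ z : ℤ)) * invert (toLaurent (R z (M v)))))) = 0 := by
      rw [← Finset.mul_sum, hzero (M u) hMune, mul_zero]
    linear_combination hFup + hFd + hFfix +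
      hunion (fun z => T 1 * (toLaurent (R (M u) z) *
        (T ((ρ (M v) : ℤ) - (ρ z : ℤ)) * invert (toLaurent (R z (M v)))))) + h4
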